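/- Let p, α, Δ, Λ ∈ ℂ with p ≠ 0, and let k be a positive integer. Suppose c ∈ ℂ[X,Y] satisfies, for all ∂, λ ∈ ℂ: (i) (Λ+1)·c(∂+λ, 0) − Λ·c(∂, 0) = c(∂, λ), and (ii) p·(∂ + Δλ + α)·(c(∂+λ, 0) − c(∂, 0)) + (p/2)·λ·c(∂+λ, 0) = (k + p/2)·λ·c(∂, λ). Then either c = 0, or else k = p, Δ = (3/2)Λ + 1, and there exists γ ∈ ℂ with γ ≠ 0 such that c(∂, λ) = γ·(∂ + (Λ+1)λ + α) for all ∂, λ ∈ ℂ. -/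

import Mathlib

open MvPolynomial

private lemma coeff_lin (b1 b2 : ℂ) (f : Polynomial ℂ) (j : ℕ) :
    (Polynomial.C b1 * (Polynomial.X + Polynomial.C b2) * f).coeff (j+1)
      = b1 * f.coeff j + b1 * (b2 * f.coeff (j+1)) := by
  have h : Polynomial.C b1 * (Polynomial.X + Polynomial.C b2) * f
      = Polynomial.C b1 * (Polynomial.X * f) + Polynomial.C b1 * (Polynomial.C b2 * f) := by ring
  rw [h, Polynomial.coeff_add, Polynomial.coeff_C_mul, Polynomial.coeff_X_mul,
    Polynomial.coeff_C_mul, Polynomial.coeff_C_mul]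

private lemma coeff_lin0 (b1 b2 : ℂ) (f : Polynomial ℂ) :
    (Polynomial.C b1 * (Polynomial.X + Polynomial.C b2) * f).coeff 0
      = b1 * (b2 * f.coeff 0) := by
  have h : Polynomial.C b1 * (Polynomial.X + Polynomial.C b2) * f
      = Polynomial.C b1 * (Polynomial.X * f) + Polynomial.C b1 * (Polynomial.C b2 * f) := by ring
  rw [h, Polynomial.coeff_add, Polynomial.coeff_C_mul, Polynomial.coeff_C_mul,
    Polynomial.coeff_C_mul, Polynomial.mul_coeff_zero, Polynomial.coeff_X_zero,
    zero_mul, mul_zero, zero_add]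

private lemma ch2C (m : ℕ) : (((m+2).choose 2 : ℕ) : ℂ) * 2 = ((m:ℂ)+2)*((m:ℂ)+1) := by
  induction m with
  | zero => norm_num
  | succ m ih =>
    rw [show m+1+2 = (m+2)+1 from rfl, Nat.choose_succ_succ, Nat.choose_one_right]
    push_cast at ih ⊢
    linear_combination ih

private lemma ch3C (m : ℕ) : (((m+2).choose 3 : ℕ) : ℂ) * 6 = ((m:ℂ)+2)*((m:ℂ)+1)*(m:ℂ) := by
  induction m with
  | zero => norm_num
  | succ m ih =>
    rw [show m+1+2 = (m+2)+1 from rfl, Nat.choose_succ_succ]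
    have h2 := ch2C m
    push_cast at ih h2 ⊢
    linear_combination ih + 3 * h2

private lemma eval_aeval_pair (c : MvPolynomial (Fin 2) ℂ) (x : ℂ) :
    Polynomial.eval x (MvPolynomial.aeval ![Polynomial.X, 0] c) = eval ![x, 0] c := by
  induction c using MvPolynomial.induction_on with
  | C r => simp
  | add f g hf hg => simp [hf, hg]
  | mul_X f i hf => fin_cases i <;> simp [hf]

theorem coefficient_polynomial_Gk_v1 (p a D A : ℂ) (hp : p ≠ 0) (k : ℕ) (hk : 0 < k)
    (c : MvPolynomial (Fin 2) ℂ)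
    (h1 : ∀ x l : ℂ,
      (A + 1) * eval ![x + l, 0] c - A * eval ![x, 0] c = eval ![x, l] c)
    (h2 : ∀ x l : ℂ,
      p * (x + D * l + a) * (eval ![x + l, 0] c - eval ![x, 0] c)
        + p / 2 * l * eval ![x + l, 0] c = ((k : ℂ) + p / 2) * l * eval ![x, l] c) :
    c = 0 ∨
      ((k : ℂ) = p ∧ D = 3 / 2 * A + 1 ∧
        ∃ γ : ℂ, γ ≠ 0 ∧ ∀ x l : ℂ, eval ![x, l] c = γ * (x + (A + 1) * l + a)) := by
  classical
  set q : Polynomial ℂ := MvPolynomial.aeval ![Polynomial.X, 0] c with hqdef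
  have hqe : ∀ x : ℂ, Polynomial.eval x q = eval ![x, 0] c := fun x => eval_aeval_pair c x
  -- value-level form of h1 and h2
  have h1q : ∀ x l : ℂ, eval ![x, l] c
      = (A+1) * Polynomial.eval (x+l) q - A * Polynomial.eval x q := by
    intro x l; rw [hqe, hqe, h1]
  have h2q : ∀ x l : ℂ, p * (x + D*l + a) * (Polynomial.eval (x+l) q - Polynomial.eval x q)
      + p/2*l*Polynomial.eval (x+l) q
      = ((k:ℂ)+p/2)*l*((A+1)*Polynomial.eval (x+l) q - A*Polynomial.eval x q) := by
    intro x l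
    rw [hqe, hqe, h1 x l]
    exact h2 x l
  by_cases hq0 : q = 0
  · left
    apply MvPolynomial.funext
    intro v
    have hv : v = ![v 0, v 1] := by
      funext i; fin_cases i <;> rfl
    rw [hv, map_zero, h1q (v 0) (v 1), hq0]
    simp
  · right
    set E : ℂ := ((k:ℂ)+p/2)*(A+1) - p*D - p/2 with hEdef
    -- coefficient equations from the functional identity
    have keyc : ∀ (x : ℂ) (j : ℕ), p*(x+a) * (Polynomial.hasseDeriv (j+1) q).eval x
        = (((k:ℂ)+p/2)*(A+1) - p*D - p/2) * (Polynomial.hasseDeriv j q).eval x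
          - (if j = 0 then (((k:ℂ)+p/2)*A - p*D) * Polynomial.eval x q else 0) := by
      intro x j
      have key : Polynomial.C (p*(x+a)) * (Polynomial.taylor x q - Polynomial.C (q.eval x))
          = Polynomial.X * ( Polynomial.C ((((k:ℂ)+p/2)*(A+1) - p*D - p/2)) * Polynomial.taylor x q
              - Polynomial.C ((((k:ℂ)+p/2)*A - p*D) * q.eval x) ) := by
        apply Polynomial.funext
        intro l
        simp only [Polynomial.eval_mul, Polynomial.eval_add, Polynomial.eval_sub,
          Polynomial.eval_C, Polynomial.eval_X, Polynomial.taylor_eval]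
        rw [add_comm l x]
        linear_combination h2q x l
      have h := congrArg (fun f => Polynomial.coeff f (j+1)) key
      simp only [Polynomial.coeff_C_mul, Polynomial.coeff_sub, Polynomial.coeff_C,
        Polynomial.coeff_X_mul, Polynomial.taylor_coeff, Nat.add_one_ne_zero, if_false] at h
      linear_combination h
    -- the ODE and the recursion
    have ode : Polynomial.C p * (Polynomial.X + Polynomial.C a) * Polynomial.derivative q
        = Polynomial.C (k:ℂ) * q := by
      apply Polynomial.funext
      intro x
      have h := keyc x 0
      simp only [if_pos rfl, if_true, zero_add, Polynomial.hasseDeriv_one,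
        Polynomial.hasseDeriv_zero, LinearMap.id_apply] at h
      simp only [Polynomial.eval_mul, Polynomial.eval_add, Polynomial.eval_C, Polynomial.eval_X]
      linear_combination h
    have hrec : ∀ j : ℕ, Polynomial.C p * (Polynomial.X + Polynomial.C a)
        * Polynomial.hasseDeriv (j+2) q = Polynomial.C E * Polynomial.hasseDeriv (j+1) q := by
      intro j
      apply Polynomial.funext
      intro x
      have h := keyc x (j+1)
      simp only [Nat.add_one_ne_zero, if_false] at h
      simp only [Polynomial.eval_mul, Polynomial.eval_add, Polynomial.eval_C, Polynomial.eval_X]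
      rw [show j+1+1 = j+2 from rfl] at h
      linear_combination h - hEdef * (Polynomial.hasseDeriv (j+1) q).eval x
    -- degree analysis
    have hqn : q.coeff q.natDegree ≠ 0 := by
      rw [← Polynomial.leadingCoeff]
      exact Polynomial.leadingCoeff_ne_zero.mpr hq0
    have hn1 : q.natDegree ≠ 0 := by
      intro h0
      have hd : Polynomial.derivative q = 0 := by
        rw [Polynomial.eq_C_of_natDegree_eq_zero h0, Polynomial.derivative_C]
      rw [hd, mul_zero] at ode
      rcases mul_eq_zero.mp ode.symm with h | h
      · exact absurd (Polynomial.C_eq_zero.mp h) (Nat.cast_ne_zero.mpr hk.ne')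
      · exact hq0 h
    obtain ⟨m, hm⟩ : ∃ m, q.natDegree = m + 1 := ⟨q.natDegree - 1, by omega⟩
    have hB : p * ((m:ℂ) + 1) = (k : ℂ) := by
      have h := congrArg (fun f => Polynomial.coeff f (m+1)) ode
      simp only [coeff_lin, Polynomial.coeff_C_mul, Polynomial.coeff_derivative] at h
      have hz : q.coeff (m+1+1) = 0 :=
        Polynomial.coeff_eq_zero_of_natDegree_lt (by omega)
      rw [hz] at h
      have hqn' : q.coeff (m+1) ≠ 0 := by rw [← hm]; exact hqn
      apply mul_right_cancel₀ hqn'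
      push_cast at h ⊢
      linear_combination h
    have hn2 : ¬ 2 ≤ q.natDegree := by
      intro h2le
      obtain ⟨m2, hm2⟩ : ∃ m2, q.natDegree = m2 + 2 := ⟨q.natDegree - 2, by omega⟩
      have hqn2 : q.coeff (m2+2) ≠ 0 := by rw [← hm2]; exact hqn
      have hz3 : q.coeff (m2+1+2) = 0 :=
        Polynomial.coeff_eq_zero_of_natDegree_lt (by omega)
      have h1' := congrArg (fun f => Polynomial.coeff f (m2+1)) (hrec 0)
      simp only [coeff_lin, Polynomial.coeff_C_mul, Polynomial.hasseDeriv_coeff, hz3,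
        mul_zero] at h1'
      rw [Nat.choose_one_right] at h1'
      have e1 : p * (((m2+2).choose 2 : ℕ) : ℂ) = E * ((m2:ℂ) + 2) := by
        apply mul_right_cancel₀ hqn2
        push_cast at h1' ⊢
        linear_combination h1'
      -- second relation from hrec 1
      rcases m2 with _ | m3
      · -- natDegree = 2
        have h2' := congrArg (fun f => Polynomial.coeff f 0) (hrec 1)
        simp only [coeff_lin0, Polynomial.coeff_C_mul, Polynomial.hasseDeriv_coeff] at h2'
        norm_num at h2' hz3 hqn2 e1
        rw [hz3] at h2'
        simp only [mul_zero] at h2'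
        have hE0 : E = 0 := by
          rcases mul_eq_zero.mp h2'.symm with h | h
          · exact h
          · exact absurd h hqn2
        rw [hE0, zero_mul] at e1
        exact hp e1
      · -- natDegree = m3 + 3
        have hz4 : q.coeff (m3+1+1+2) = 0 :=
          Polynomial.coeff_eq_zero_of_natDegree_lt (by omega)
        have h2' := congrArg (fun f => Polynomial.coeff f (m3+1)) (hrec 1)
        simp only [coeff_lin, Polynomial.coeff_C_mul, Polynomial.hasseDeriv_coeff, hz4,
          mul_zero] at h2'
        have e2 : p * (((m3+3).choose 3 : ℕ) : ℂ) = E * (((m3+3).choose 2 : ℕ) : ℂ) := by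
          apply mul_right_cancel₀ (show q.coeff (m3+3) ≠ 0 from hqn2)
          push_cast at h2' ⊢
          linear_combination h2'
        -- combine
        have e1' : p * (((m3+3).choose 2 : ℕ) : ℂ) = E * ((m3:ℂ) + 3) := by
          push_cast at e1 ⊢
          linear_combination e1
        have heq : (((m3+3).choose 3 : ℕ) : ℂ) * ((m3:ℂ)+3)
            = (((m3+3).choose 2 : ℕ) : ℂ) * (((m3+3).choose 2 : ℕ) : ℂ) := by
          apply mul_left_cancel₀ hp
          linear_combination ((m3:ℂ)+3) * e2 - (((m3+3).choose 2 : ℕ) : ℂ) * e1'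
        have hc2 : (((m3+3).choose 2 : ℕ) : ℂ) = ((m3:ℂ)+3)*((m3:ℂ)+2)/2 := by
          have := ch2C (m3+1)
          push_cast at this ⊢
          linear_combination this / 2
        have hc3 : (((m3+3).choose 3 : ℕ) : ℂ) = ((m3:ℂ)+3)*((m3:ℂ)+2)*((m3:ℂ)+1)/6 := by
          have := ch3C (m3+1)
          push_cast at this ⊢
          linear_combination this / 6
        rw [hc2, hc3] at heq
        have hzero : (((m3:ℂ)+3)*((m3:ℂ)+3)*((m3:ℂ)+2))*((m3:ℂ)+4) = 0 := by
          linear_combination (-12 : ℂ) * heq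
        have hne : ((m3:ℂ)+3)*((m3:ℂ)+3)*((m3:ℂ)+2) ≠ 0 := by
          have h3 : ((m3:ℂ)+3) ≠ 0 := by
            intro h
            have : ((m3+3 : ℕ) : ℂ) = 0 := by push_cast; linear_combination h
            exact absurd (Nat.cast_eq_zero.mp this) (by omega)
          have h2'' : ((m3:ℂ)+2) ≠ 0 := by
            intro h
            have : ((m3+2 : ℕ) : ℂ) = 0 := by push_cast; linear_combination h
            exact absurd (Nat.cast_eq_zero.mp this) (by omega)
          exact mul_ne_zero (mul_ne_zero h3 h3) h2''
        have h4 : ((m3:ℂ)+4) = 0 := (mul_eq_zero.mp hzero).resolve_left hne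
        have : ((m3+4 : ℕ) : ℂ) = 0 := by push_cast; linear_combination h4
        exact absurd (Nat.cast_eq_zero.mp this) (by omega)
    have hn : q.natDegree = 1 := by omega
    have hm0 : m = 0 := by omega
    -- k = p
    have hkp : (k:ℂ) = p := by
      rw [hm0] at hB
      push_cast at hB
      linear_combination -hB
    -- H2 = 0 and E = 0
    have hH2 : Polynomial.hasseDeriv 2 q = 0 := by
      ext j
      rw [Polynomial.hasseDeriv_coeff]
      rw [Polynomial.coeff_eq_zero_of_natDegree_lt (by omega)]
      simp
    have hr := hrec 0
    rw [show (0:ℕ)+2 = 2 from rfl, show (0:ℕ)+1 = 1 from rfl, hH2, mul_zero,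
      Polynomial.hasseDeriv_one] at hr
    have hd1 : Polynomial.derivative q ≠ 0 := by
      intro h
      apply hqn
      rw [hn]
      have h0 := congrArg (fun f => Polynomial.coeff f 0) h
      simp only [Polynomial.coeff_derivative, Polynomial.coeff_zero] at h0
      simpa using h0
    have hE0 : E = 0 := by
      rcases mul_eq_zero.mp hr.symm with h | h
      · exact Polynomial.C_eq_zero.mp h
      · exact absurd h hd1
    have hD : D = 3/2*A + 1 := by
      apply mul_left_cancel₀ hp
      rw [hEdef] at hE0
      linear_combination -hE0 + (A+1) * hkp
    -- derivative q = C γ, q.eval x = γ (x+a)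
    set γ : ℂ := q.coeff 1 with hγdef
    have hγ : γ ≠ 0 := by rw [hγdef, ← hn]; exact hqn
    have hd' : Polynomial.derivative q = Polynomial.C γ := by
      have hlt : (Polynomial.derivative q).natDegree = 0 := by
        have := Polynomial.natDegree_derivative_lt (p := q) (by omega)
        omega
      rw [Polynomial.eq_C_of_natDegree_eq_zero hlt]
      congr 1
      rw [Polynomial.coeff_derivative]
      norm_num
      exact hγdef.symm
    have hqev : ∀ x : ℂ, Polynomial.eval x q = γ * (x + a) := by
      intro x
      have h := congrArg (Polynomial.eval x) ode
      simp only [Polynomial.eval_mul, Polynomial.eval_add, Polynomial.eval_C,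
        Polynomial.eval_X, hd'] at h
      apply mul_left_cancel₀ hp
      linear_combination -h - hkp * Polynomial.eval x q
    refine ⟨hkp, hD, γ, hγ, ?_⟩
    intro x l
    rw [h1q x l, hqev, hqev]
    ring
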